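/- For fixed λ₁ > 0, the function F(ε, δ) = -(ε-δ)log(ε-δ) + (1-δ)log(1-δ) + δ log(1+λ₁) on 0 < δ ≤ ε (with 0 log 0 = 0), maximized over δ for fixed ε ∈ (0,1], attains its maximum at δ = 0 if ε ≤ 1/(1+λ₁), and at δ = ((1+λ₁)ε − 1)/λ₁ if ε > 1/(1+λ₁). -/

import Mathlib

lemma key_log_ineq (t b : ℝ) (ht : 0 ≤ t) (hb : 0 < b) :
    t - b ≤ t * (Real.log t - Real.log b) := by
  rcases ht.eq_or_lt with h | h
  · rw [← h]; simp; linarith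
  · have h1 : Real.log (b / t) ≤ b / t - 1 := Real.log_le_sub_one_of_pos (div_pos hb h)
    rw [Real.log_div hb.ne' h.ne'] at h1
    have h2 := mul_le_mul_of_nonneg_left h1 h.le
    have h3 : t * (b / t - 1) = b - t := by field_simp
    nlinarith [h2]

/-- Note `Real.log 0 = 0` in Mathlib, encoding the convention `0 · log 0 = 0`. -/
theorem stmt_12 (lam1 : ℝ) (hlam : 0 < lam1)
    (F : ℝ → ℝ → ℝ)
    (hF : ∀ ε δ : ℝ, F ε δ =
      -((ε - δ) * Real.log (ε - δ)) + (1 - δ) * Real.log (1 - δ) + δ * Real.log (1 + lam1)) :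
    ∀ ε : ℝ, 0 < ε → ε ≤ 1 →
      ((ε ≤ 1 / (1 + lam1) → ∀ δ : ℝ, 0 ≤ δ → δ ≤ ε → F ε δ ≤ F ε 0) ∧
        (1 / (1 + lam1) < ε → ∀ δ : ℝ, 0 ≤ δ → δ ≤ ε →
          F ε δ ≤ F ε (((1 + lam1) * ε - 1) / lam1))) := by
  intro ε hε hε1
  have hL : (0:ℝ) < 1 + lam1 := by linarith
  constructor
  · intro hcase δ hδ0 hδε
    have hεlt1 : ε < 1 := lt_of_le_of_lt hcase (by rw [div_lt_one hL]; linarith)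
    have hs : 0 < 1 - δ := by linarith
    have hm : 0 < 1 - ε := by linarith
    have hA : 0 ≤ ε - δ := by linarith
    have hK1 := key_log_ineq (ε - δ) (ε * (1 - δ)) hA (by positivity)
    have hK2 := key_log_ineq (1 - ε) ((1 - ε) * (1 - δ)) hm.le (by positivity)
    rw [Real.log_mul hε.ne' hs.ne'] at hK1
    rw [Real.log_mul hm.ne' hs.ne'] at hK2
    have hεle : ε * (1 + lam1) ≤ 1 := by rw [le_div_iff₀ hL] at hcase; linarith
    have hlog : Real.log ε + Real.log (1 + lam1) ≤ 0 := by
      rw [← Real.log_mul hε.ne' hL.ne']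
      exact Real.log_nonpos (by positivity) hεle
    have h3 : δ * (Real.log ε + Real.log (1 + lam1)) ≤ 0 :=
      mul_nonpos_of_nonneg_of_nonpos hδ0 hlog
    rw [hF, hF]
    simp only [sub_zero, mul_zero, zero_mul, Real.log_one, mul_one, add_zero]
    nlinarith [hK1, hK2, h3]
  · intro hcase δ hδ0 hδε
    rcases eq_or_lt_of_le hε1 with hε1' | hεlt1
    · subst hε1'
      rw [hF, hF]
      have h1 : ((1 + lam1) * 1 - 1) / lam1 = 1 := by field_simp; ring
      rw [h1]
      have hc : 0 ≤ Real.log (1 + lam1) := Real.log_nonneg (by linarith)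
      norm_num
      nlinarith [hc]
    · have hm : 0 < 1 - ε := by linarith
      have hs : 0 < 1 - δ := by linarith
      have hA : 0 ≤ ε - δ := by linarith
      have h1 : ε - ((1 + lam1) * ε - 1) / lam1 = (1 - ε) / lam1 := by
        field_simp; ring
      have h2 : (1:ℝ) - ((1 + lam1) * ε - 1) / lam1 = (1 + lam1) * (1 - ε) / lam1 := by
        field_simp; ring
      have hΦ : F ε (((1 + lam1) * ε - 1) / lam1) =
          (1 - ε) * Real.log (1 - ε) - (1 - ε) * Real.log lam1 + Real.log (1 + lam1) := by
        rw [hF, h1, h2, Real.log_div hm.ne' hlam.ne',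
          Real.log_div (mul_ne_zero hL.ne' hm.ne') hlam.ne', Real.log_mul hL.ne' hm.ne']
        field_simp
        ring
      have hK1 := key_log_ineq (ε - δ) ((1 - δ) / (1 + lam1)) hA (by positivity)
      have hK2 := key_log_ineq (1 - ε) ((1 - δ) * lam1 / (1 + lam1)) hm.le (by positivity)
      rw [Real.log_div hs.ne' hL.ne'] at hK1
      rw [Real.log_div (mul_ne_zero hs.ne' hlam.ne') hL.ne',
        Real.log_mul hs.ne' hlam.ne'] at hK2
      have hXY : (1 - δ) / (1 + lam1) + (1 - δ) * lam1 / (1 + lam1) = 1 - δ := by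
        field_simp
      rw [hF, hΦ]
      nlinarith [hK1, hK2, hXY]
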